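/- Let f be C⁴ on a neighbourhood of x₀ and fix v ∈ E. Define the nonlinear part f_nl(a) := f(x₀ + a) − f(x₀) − f′(x₀)(a). Then the three-point stencil for the second directional derivative is fourth-order accurate: the function ε ↦ 16 • f_nl((ε/2)•v) − 2 • f_nl(ε•v) − ε² • f″(x₀)[v,v] is O(ε⁴) as ε → 0. -/

import Mathlib

open Topology Asymptotics

section AuxTaylor
open Filter Set
variable {F : Type*} [NormedAddCommGroup F] [NormedSpace ℝ F]

lemma aux_deriv_contDiffAt {g : ℝ → F} {n : ℕ} (hg : ContDiffAt ℝ (n + 1) g 0) :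
    ContDiffAt ℝ n (deriv g) 0 := by
  have h : ContDiffAt ℝ n (fderiv ℝ g) 0 := hg.fderiv_right (by norm_cast)
  have h2 : ContDiffAt ℝ n (fun t => fderiv ℝ g t 1) 0 := h.clm_apply contDiffAt_const
  exact h2.congr_of_eventuallyEq (Filter.Eventually.of_forall fun t => (fderiv_apply_one_eq_deriv).symm)


lemma aux_mvt {k R : ℝ → F} {n : ℕ}
    (hdiff : ∀ᶠ t in 𝓝 (0 : ℝ), HasDerivAt k (R t) t)
    (hR : R =o[𝓝 (0 : ℝ)] fun t => t ^ n)
    (hk0 : k 0 = 0) :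
    k =o[𝓝 (0 : ℝ)] fun t => t ^ (n + 1) := by
  rw [Asymptotics.isLittleO_iff] at hR ⊢
  intro c hc
  obtain ⟨δ, hδ, H⟩ := Metric.eventually_nhds_iff.1 (hdiff.and (hR hc))
  refine Metric.eventually_nhds_iff.2 ⟨δ, hδ, fun {t} ht => ?_⟩
  have habs : ∀ s ∈ Set.uIcc (0 : ℝ) t, |s| ≤ |t| := by
    intro s hs
    rcases Set.mem_uIcc.1 hs with ⟨h1, h2⟩ | ⟨h1, h2⟩ <;> rw [abs_le] <;>
      constructor <;> nlinarith [le_abs_self t, neg_abs_le t]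
  have hball : ∀ s ∈ Set.uIcc (0 : ℝ) t, dist s 0 < δ := by
    intro s hs
    rw [Real.dist_eq, sub_zero]
    exact lt_of_le_of_lt (habs s hs) (by simpa [Real.dist_eq] using ht)
  have key : ‖k t - k 0‖ ≤ (c * |t| ^ n) * ‖t - 0‖ := by
    refine Convex.norm_image_sub_le_of_norm_hasDerivWithin_le
      (f' := R) (fun s hs => ((H (hball s hs)).1).hasDerivWithinAt)
      (fun s hs => ?_) (convex_uIcc _ _) Set.left_mem_uIcc Set.right_mem_uIcc
    calc ‖R s‖ ≤ c * ‖s ^ n‖ := (H (hball s hs)).2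
    _ = c * |s| ^ n := by rw [norm_pow]; rfl
    _ ≤ c * |t| ^ n :=
        mul_le_mul_of_nonneg_left (pow_le_pow_left₀ (abs_nonneg s) (habs s hs) n) hc.le
  rw [hk0, sub_zero] at key
  calc ‖k t‖ ≤ (c * |t| ^ n) * ‖t - 0‖ := key
  _ = c * ‖t ^ (n + 1)‖ := by
      rw [sub_zero, norm_pow, Real.norm_eq_abs, pow_succ]; ring

lemma aux_taylor : ∀ (n : ℕ) (g : ℝ → F), ContDiffAt ℝ (n + 1) g 0 →
    (fun t => g t - ∑ i ∈ Finset.range (n + 2),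
        (t ^ i / i.factorial) • iteratedDeriv i g 0)
      =o[𝓝 (0 : ℝ)] fun t => t ^ (n + 1) := by
  intro n
  induction n with
  | zero =>
    intro g hg
    have hd : HasDerivAt g (deriv g 0) 0 :=
      (hg.differentiableAt (by norm_cast)).hasDerivAt
    rw [hasDerivAt_iff_isLittleO] at hd
    have : (fun t : ℝ => g t - g 0 - (t - 0) • deriv g 0) =
        fun t => g t - ∑ i ∈ Finset.range 2,
          (t ^ i / i.factorial) • iteratedDeriv i g 0 := by
      funext t
      simp [Finset.sum_range_succ, iteratedDeriv_one, iteratedDeriv_zero, sub_sub]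
    rw [this] at hd
    simpa using hd
  | succ n IH =>
    intro g hg
    have hg' : ContDiffAt ℝ (n + 1) (deriv g) 0 := by
      apply aux_deriv_contDiffAt
      exact_mod_cast hg
    have IH' := IH (deriv g) hg'
    have hiter : ∀ i : ℕ, iteratedDeriv i (deriv g) 0 = iteratedDeriv (i + 1) g 0 :=
      fun i => by rw [← iteratedDeriv_succ']
    -- R' is the Taylor remainder of deriv g
    set Rh : ℝ → F := fun t => deriv g t -
      ∑ i ∈ Finset.range (n + 2), (t ^ i / i.factorial) • iteratedDeriv (i + 1) g 0 with hRh
    have hRh_o : Rh =o[𝓝 (0 : ℝ)] fun t => t ^ (n + 1) := by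
      refine IH'.congr' (Filter.Eventually.of_forall fun t => ?_) (Filter.Eventually.of_forall fun t => rfl)
      simp only [hRh, hiter]
    set k : ℝ → F := fun t => g t -
      ∑ i ∈ Finset.range (n + 3), (t ^ i / i.factorial) • iteratedDeriv i g 0 with hk
    have hdiff : ∀ᶠ t in 𝓝 (0 : ℝ), HasDerivAt k (Rh t) t := by
      have hev : ∀ᶠ t in 𝓝 (0 : ℝ), DifferentiableAt ℝ g t := by
        have h1 : ∀ᶠ t in 𝓝 (0 : ℝ), ContDiffAt ℝ (n + 1 + 1) g t :=
          hg.eventually (by simp)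
        exact h1.mono fun t ht => ht.differentiableAt (by norm_cast)
      refine hev.mono fun t ht => ?_
      have hP : HasDerivAt (fun t : ℝ => ∑ i ∈ Finset.range (n + 3),
          (t ^ i / i.factorial) • iteratedDeriv i g 0)
          (∑ i ∈ Finset.range (n + 2),
            (t ^ i / i.factorial) • iteratedDeriv (i + 1) g 0) t := by
        have h1 : HasDerivAt (fun t : ℝ => ∑ i ∈ Finset.range (n + 3),
            (t ^ i / i.factorial) • iteratedDeriv i g 0)
            (∑ i ∈ Finset.range (n + 3),
              ((i : ℝ) * t ^ (i - 1) / i.factorial) • iteratedDeriv i g 0) t := by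
          apply HasDerivAt.fun_sum
          intro i _
          exact ((hasDerivAt_pow i t).div_const _).smul_const _
        convert h1 using 1
        rw [Finset.sum_range_succ' (fun i => ((i : ℝ) * t ^ (i - 1) / i.factorial)
          • iteratedDeriv i g 0) (n + 2)]
        simp only [Nat.cast_zero, zero_mul, zero_div, zero_smul, add_zero]
        refine Finset.sum_congr rfl fun i _ => ?_
        congr 1
        rw [Nat.factorial_succ]
        push_cast
        have hne : ((i : ℝ) + 1) ≠ 0 := by positivity
        field_simp
      simpa [hk, hRh] using ht.hasDerivAt.fun_sub hP
    have hk0 : k 0 = 0 := by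
      simp only [hk]
      rw [Finset.sum_eq_single 0]
      · simp
      · intro i _ hi
        simp [zero_pow hi]
      · simp
    exact aux_mvt hdiff hRh_o hk0

lemma aux_taylor3 {g : ℝ → F} (hg : ContDiffAt ℝ 4 g 0) :
    (fun t => g t - g 0 - t • iteratedDeriv 1 g 0 - (t ^ 2 / 2) • iteratedDeriv 2 g 0
        - (t ^ 3 / 6) • iteratedDeriv 3 g 0) =O[𝓝 (0 : ℝ)] fun t => t ^ 4 := by
  have h := (aux_taylor 3 g (by exact_mod_cast hg)).isBigO
  have h2 : (fun t : ℝ => (t ^ 4 / 24) • iteratedDeriv 4 g 0) =O[𝓝 (0 : ℝ)]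
      fun t => t ^ 4 := by
    refine IsBigO.of_bound (‖iteratedDeriv 4 g 0‖ / 24) ?_
    filter_upwards with t
    rw [norm_smul, Real.norm_eq_abs (t ^ 4 / 24), abs_div]
    have h24 : |(24 : ℝ)| = 24 := by norm_num
    rw [h24, Real.norm_eq_abs (t ^ 4)]
    exact le_of_eq (by ring)
  refine (h.add h2).congr_left fun t => ?_
  simp only [Finset.sum_range_succ, Finset.sum_range_zero, zero_add, iteratedDeriv_zero,
    Nat.factorial, pow_zero, pow_one]
  push_cast
  norm_num
  module
end AuxTaylor

/-- Third-order-accurate two-point stencil (plus base point and Jacobian)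
for the second directional derivative:
`16 • f_nl((ε/2)•v) - 2 • f_nl(ε•v) = ε² • f″(x₀)[v,v] + O(ε⁴)`. -/
theorem second_directional_derivative_stencil_order4
    {E F : Type*} [NormedAddCommGroup E] [NormedSpace ℝ E] [CompleteSpace E]
    [NormedAddCommGroup F] [NormedSpace ℝ F] [CompleteSpace F]
    (f : E → F) (x₀ v : E)
    (hf : ContDiffAt ℝ 4 f x₀)
    (fnl : E → F) (hfnl : ∀ a, fnl a = f (x₀ + a) - f x₀ - fderiv ℝ f x₀ a) :
    (fun ε : ℝ =>
        (16 : ℝ) • fnl ((ε / 2) • v) - (2 : ℝ) • fnl (ε • v)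
          - ε ^ 2 • iteratedFDeriv ℝ 2 f x₀ ![v, v])
      =O[𝓝 (0 : ℝ)] fun ε => ε ^ 4 := by
  have hx0 : x₀ + (0 : ℝ) • v = x₀ := by simp
  have hcurve : ∀ t : ℝ, HasDerivAt (fun s : ℝ => x₀ + s • v) v t := by
    intro t
    simpa using (((hasDerivAt_id t).smul_const v).const_add x₀)
  set w := fderiv ℝ f x₀ v with hw
  set A := iteratedFDeriv ℝ 2 f x₀ ![v, v] with hA
  set φ : ℝ → F := fun t => f (x₀ + t • v) with hφdef
  have hφ : ContDiffAt ℝ 4 φ 0 := by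
    have hc : ContDiffAt ℝ 4 (fun t : ℝ => x₀ + t • v) 0 :=
      contDiffAt_const.add (contDiffAt_id.smul contDiffAt_const)
    have hf' : ContDiffAt ℝ 4 f (x₀ + (0 : ℝ) • v) := by rw [hx0]; exact hf
    exact ContDiffAt.comp 0 hf' hc
  have hφ0 : φ 0 = f x₀ := by rw [hφdef]; simp
  -- first derivative
  have hdφ : HasDerivAt φ w 0 := by
    have hF : HasFDerivAt f (fderiv ℝ f x₀) (x₀ + (0 : ℝ) • v) := by
      rw [hx0]; exact (hf.differentiableAt (by norm_num)).hasFDerivAt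
    exact hF.comp_hasDerivAt 0 (hcurve 0)
  have h1 : iteratedDeriv 1 φ 0 = w := by rw [iteratedDeriv_one]; exact hdφ.deriv
  -- eventual smoothness along the line
  have hev : ∀ᶠ t in 𝓝 (0 : ℝ), ContDiffAt ℝ 4 f (x₀ + t • v) := by
    have hn : ∀ᶠ y in 𝓝 x₀, ContDiffAt ℝ 4 f y := hf.eventually (by simp)
    have htend : Filter.Tendsto (fun t : ℝ => x₀ + t • v) (𝓝 0) (𝓝 x₀) := by
      have := (hcurve 0).continuousAt.tendsto
      rwa [hx0] at this
    exact htend.eventually hn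
  have hevd : ∀ᶠ t in 𝓝 (0 : ℝ), HasDerivAt φ (fderiv ℝ f (x₀ + t • v) v) t := by
    refine hev.mono fun t ht => ?_
    exact ((ht.differentiableAt (by norm_num)).hasFDerivAt).comp_hasDerivAt t (hcurve t)
  -- second derivative
  have h2 : iteratedDeriv 2 φ 0 = A := by
    have hG : DifferentiableAt ℝ (fderiv ℝ f) x₀ :=
      (hf.fderiv_right (m := 1) (by norm_num)).differentiableAt (by norm_num)
    have h4 : HasDerivAt (fun t : ℝ => fderiv ℝ f (x₀ + t • v))
        (fderiv ℝ (fderiv ℝ f) x₀ v) 0 := by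
      have h3 : HasFDerivAt (fderiv ℝ f) (fderiv ℝ (fderiv ℝ f) x₀) (x₀ + (0 : ℝ) • v) := by
        rw [hx0]; exact hG.hasFDerivAt
      exact h3.comp_hasDerivAt 0 (hcurve 0)
    have hψ : HasDerivAt (fun t : ℝ => fderiv ℝ f (x₀ + t • v) v)
        ((fderiv ℝ (fderiv ℝ f) x₀ v) v) 0 := by
      simpa using h4.clm_apply (hasDerivAt_const (0 : ℝ) v)
    have heq : deriv φ =ᶠ[𝓝 (0 : ℝ)] fun t => fderiv ℝ f (x₀ + t • v) v :=
      hevd.mono fun t ht => ht.deriv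
    calc iteratedDeriv 2 φ 0 = deriv (deriv φ) 0 := by
          rw [iteratedDeriv_succ, iteratedDeriv_one]
    _ = deriv (fun t : ℝ => fderiv ℝ f (x₀ + t • v) v) 0 := heq.deriv_eq
    _ = (fderiv ℝ (fderiv ℝ f) x₀ v) v := hψ.deriv
    _ = A := by
          rw [hA, iteratedFDeriv_two_apply]
          simp
  -- Taylor remainder
  set d3 := iteratedDeriv 3 φ 0 with hd3
  set R : ℝ → F := fun t => φ t - φ 0 - t • w - (t ^ 2 / 2) • A - (t ^ 3 / 6) • d3 with hRdef
  have hR : R =O[𝓝 (0 : ℝ)] fun t => t ^ 4 := by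
    have := aux_taylor3 hφ
    rw [h1, h2] at this
    exact this
  have hhalf : (fun t => R (t / 2)) =O[𝓝 (0 : ℝ)] fun t => t ^ 4 := by
    have htend : Filter.Tendsto (fun t : ℝ => t / 2) (𝓝 0) (𝓝 0) := by
      simpa using (Filter.tendsto_id (x := 𝓝 (0 : ℝ))).div_const 2
    have hcomp := hR.comp_tendsto htend
    have hquart : ((fun t : ℝ => t ^ 4) ∘ fun t => t / 2) =O[𝓝 (0 : ℝ)]
        fun t => t ^ 4 := by
      refine IsBigO.of_bound (1 / 16) ?_
      filter_upwards with t
      simp only [Function.comp_apply, Real.norm_eq_abs]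
      rw [div_pow, abs_div]
      have : |(2 : ℝ) ^ 4| = 16 := by norm_num
      rw [this]
      exact le_of_eq (by ring)
    exact (hcomp.trans hquart)
  have hcomb : ((fun ε : ℝ => (16 : ℝ) • R (ε / 2) - (2 : ℝ) • R ε)) =O[𝓝 (0 : ℝ)]
      fun ε => ε ^ 4 := (hhalf.const_smul_left (16 : ℝ)).sub (hR.const_smul_left (2 : ℝ))
  refine hcomb.congr_left fun ε => ?_
  rw [hfnl, hfnl]
  have e1 : f (x₀ + (ε / 2) • v) = φ (ε / 2) := rfl
  have e2 : f (x₀ + ε • v) = φ ε := rfl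
  rw [e1, e2, (fderiv ℝ f x₀).map_smul, (fderiv ℝ f x₀).map_smul, ← hw, ← hφ0, hRdef]
  simp only
  module
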